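/- Let n, d ≥ 1 be integers, write n = a·d + r with a := ⌊n/d⌋ and 0 ≤ r < d, and let ζ_{2d} := e^{πi/d}. Then num(n, ζ_{2d}) ≠ 0 if and only if num(r, ζ_{2d}) ≠ 0; indeed num(n, ζ_{2d}) = C·num(r, ζ_{2d}) for some nonzero complex number C (depending only on n and d). -/

import Mathlib

open Polynomial Finset

/-- `h_λ(x) = ∏_{i=1}^{n} (1+x^i)^(⌊n/i⌋ - m_λ(i))` in `ℤ[x]`, where `m_λ(i)` is the
multiplicity of the part `i` in the partition `λ` of `n`. -/
noncomputable def hPoly (n : ℕ) (μ : Nat.Partition n) : Polynomial ℤ :=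
  ∏ i ∈ Finset.Icc 1 n, (1 + X ^ i) ^ (n / i - μ.parts.count i)

/-- `G(n,x)`: the (normalized) gcd of the `h_λ(x)` over all partitions `λ` of `n`. -/
noncomputable def GPoly (n : ℕ) : Polynomial ℤ :=
  Finset.univ.gcd (hPoly n)

theorem GPoly_dvd_sum (n : ℕ) :
    ∃ q : Polynomial ℤ, (∑ μ : Nat.Partition n, hPoly n μ) = GPoly n * q :=
  exists_eq_mul_right_of_dvd
    (Finset.dvd_sum fun μ _ => Finset.gcd_dvd (Finset.mem_univ μ))

/-- `num(n,x) = (∑_{λ ⊢ n} h_λ(x)) / G(n,x)`. -/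
noncomputable def numPoly (n : ℕ) : Polynomial ℤ :=
  (GPoly_dvd_sum n).choose

theorem GPoly_dvd_prod (n : ℕ) :
    ∃ q : Polynomial ℤ,
      (∏ i ∈ Finset.Icc 1 n, ((1 : Polynomial ℤ) + X ^ i) ^ (n / i)) = GPoly n * q :=
  exists_eq_mul_right_of_dvd <|
    dvd_trans (Finset.gcd_dvd (Finset.mem_univ (Nat.Partition.indiscrete n)))
      (Finset.prod_dvd_prod_of_dvd _ _ fun _ _ => pow_dvd_pow _ (Nat.sub_le _ _))

/-- `den(n,x) = (∏_{i=1}^{n} (1+x^i)^⌊n/i⌋) / G(n,x)`. -/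
noncomputable def denPoly (n : ℕ) : Polynomial ℤ :=
  (GPoly_dvd_prod n).choose


-- ===== auxiliary lemmas =====

lemma zeta_pow_iff (d : ℕ) (hd : 1 ≤ d) (i : ℕ) :
    (Complex.exp (Real.pi * Complex.I / d)) ^ i = -1 ↔ i % (2*d) = d := by
  have hd0 : (d : ℂ) ≠ 0 := Nat.cast_ne_zero.mpr (by omega)
  have hpi : (Real.pi : ℂ) * Complex.I ≠ 0 := by
    simp [Complex.I_ne_zero, Real.pi_ne_zero]
  rw [← Complex.exp_nat_mul, ← Complex.exp_pi_mul_I, Complex.exp_eq_exp_iff_exists_int]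
  constructor
  · rintro ⟨k, hk⟩
    have hk2 : (i : ℂ) * (Real.pi * Complex.I) = (d + 2*k*d) * (Real.pi * Complex.I) := by
      field_simp at hk
      linear_combination (↑Real.pi * Complex.I) * hk
    have hk3 : (i : ℂ) = ((d + 2*k*d : ℤ) : ℂ) := by
      push_cast
      exact mul_right_cancel₀ hpi hk2
    have hk4 : (i : ℤ) = d + 2*k*d := by exact_mod_cast hk3
    have hk5 : 0 ≤ k := by nlinarith [Int.ofNat_nonneg i, hk4]
    lift k to ℕ using hk5 with k'
    have hk6 : i = d + 2*d*k' := by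
      have : (i : ℤ) = ((d + 2*d*k' : ℕ) : ℤ) := by push_cast; linarith [hk4]
      exact_mod_cast this
    rw [hk6, show 2*d*k' = k'*(2*d) by ring, Nat.add_mul_mod_self_right,
      Nat.mod_eq_of_lt (by omega)]
  · intro h
    set q := i/(2*d) with hqdef
    have hdm := Nat.div_add_mod i (2*d)
    rw [← hqdef] at hdm
    have hq : i = d + 2*d*q := by omega
    refine ⟨(q : ℤ), ?_⟩
    rw [hq]
    push_cast
    field_simp

lemma msum_le_msum (s t : Multiset ℕ) (h : s ≤ t) : s.sum ≤ t.sum := by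
  obtain ⟨u, rfl⟩ := Multiset.le_iff_exists_add.mp h
  simp

lemma count_mul_le (s : Multiset ℕ) (i : ℕ) : s.count i * i ≤ s.sum := by
  have h : Multiset.replicate (s.count i) i ≤ s := Multiset.le_count_iff_replicate_le.mp le_rfl
  have := msum_le_msum _ _ h
  simpa [Multiset.sum_replicate, smul_eq_mul] using this

lemma count_le_div {n : ℕ} (μ : Nat.Partition n) {i : ℕ} (hi : 1 ≤ i) :
    μ.parts.count i ≤ n / i := by
  rw [Nat.le_div_iff_mul_le (by omega)]
  simpa [μ.parts_sum] using count_mul_le μ.parts i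

lemma part_le_n {n : ℕ} (μ : Nat.Partition n) {x : ℕ} (hx : x ∈ μ.parts) : x ≤ n := by
  have := Multiset.single_le_sum (fun y _ => Nat.zero_le y) x hx
  simpa [μ.parts_sum] using this

lemma sum_count_mul_le (s : Multiset ℕ) (t : Finset ℕ) :
    ∑ i ∈ t, s.count i * i ≤ s.sum := by
  classical
  have hM : (∑ i ∈ t, Multiset.replicate (s.count i) i) ≤ s := by
    rw [Multiset.le_iff_count]
    intro j
    rw [Multiset.count_sum']
    simp only [Multiset.count_replicate]
    by_cases hj : j ∈ t
    · rw [Finset.sum_eq_single_of_mem j hj (by intro b _ hb; simp [hb])]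
      simp
    · rw [Finset.sum_eq_zero]
      · exact Nat.zero_le _
      intro b hb
      have : b ≠ j := fun h => hj (h ▸ hb)
      simp [this]
  have h2 := msum_le_msum _ _ hM
  rw [show (∑ i ∈ t, Multiset.replicate (s.count i) i).sum
      = ∑ i ∈ t, (Multiset.replicate (s.count i) i).sum from
    (map_sum Multiset.sumAddMonoidHom _ _ : _)] at h2
  simpa [Multiset.sum_replicate, smul_eq_mul] using h2

-- factorization of 1+X^i at a simple root
lemma one_add_X_pow_factor (ζ : ℂ) (hζ : ζ ≠ 0) (i : ℕ) (hi : 1 ≤ i) (h : ζ^i = -1) :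
    (1 + X^i : Polynomial ℂ) = (X - C ζ) * ((1 + X^i : Polynomial ℂ) /ₘ (X - C ζ)) ∧
      (((1 + X^i : Polynomial ℂ) /ₘ (X - C ζ))).eval ζ ≠ 0 := by
  have hroot : IsRoot (1 + X^i : Polynomial ℂ) ζ := by
    simp [IsRoot, h]
  have heq := (mul_divByMonic_eq_iff_isRoot (p := (1 + X^i : Polynomial ℂ)) (a := ζ)).mpr hroot
  refine ⟨heq.symm, ?_⟩
  set v := ((1 + X^i : Polynomial ℂ) /ₘ (X - C ζ)) with hv
  have hder := congrArg derivative heq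
  rw [derivative_mul, derivative_sub, derivative_X, derivative_C, sub_zero, one_mul] at hder
  have hev := congrArg (eval ζ) hder
  simp only [eval_add, eval_mul, eval_sub, eval_X, eval_C, sub_self, zero_mul, add_zero] at hev
  rw [derivative_add, derivative_one, derivative_X_pow, zero_add] at hev
  simp only [eval_mul, eval_pow, eval_C, eval_X, eval_natCast] at hev
  rw [hev]
  exact mul_ne_zero (Nat.cast_ne_zero.mpr (by omega)) (pow_ne_zero _ hζ)

lemma prod_factor (n d : ℕ) (hd : 1 ≤ d) (c : ℕ → ℕ) :
    ∃ u : Polynomial ℂ,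
      (∏ i ∈ Icc 1 n, ((1 : Polynomial ℂ) + X^i)^(c i))
        = (X - C (Complex.exp (Real.pi * Complex.I / d)))
            ^ (∑ i ∈ (Icc 1 n).filter (fun i => i % (2*d) = d), c i) * u
        ∧ u.eval (Complex.exp (Real.pi * Complex.I / d)) ≠ 0 := by
  classical
  set ζ := Complex.exp (Real.pi * Complex.I / d) with hζdef
  have hζ0 : ζ ≠ 0 := Complex.exp_ne_zero _
  set F := (Icc 1 n).filter (fun i => i % (2*d) = d) with hF
  set v : ℕ → Polynomial ℂ := fun i => ((1 + X^i : Polynomial ℂ) /ₘ (X - C ζ)) with hvdef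
  refine ⟨(∏ i ∈ F, (v i)^(c i)) * ∏ i ∈ (Icc 1 n).filter (fun i => ¬ (i % (2*d) = d)),
      ((1 : Polynomial ℂ) + X^i)^(c i), ?_, ?_⟩
  · rw [← Finset.prod_filter_mul_prod_filter_not (Icc 1 n) (fun i => i % (2*d) = d)]
    have h1 : ∏ i ∈ F, ((1 : Polynomial ℂ) + X^i)^(c i)
        = (X - C ζ) ^ (∑ i ∈ F, c i) * ∏ i ∈ F, (v i)^(c i) := by
      rw [← Finset.prod_pow_eq_pow_sum, ← Finset.prod_mul_distrib]
      refine Finset.prod_congr rfl ?_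
      intro i hi
      rw [hF, Finset.mem_filter, Finset.mem_Icc] at hi
      have hfac := one_add_X_pow_factor ζ hζ0 i hi.1.1 ((zeta_pow_iff d hd i).mpr hi.2)
      rw [← mul_pow, ← hfac.1]
    rw [h1]
    ring
  · rw [eval_mul, eval_prod, eval_prod]
    refine mul_ne_zero (Finset.prod_ne_zero_iff.mpr ?_) (Finset.prod_ne_zero_iff.mpr ?_)
    · intro i hi
      rw [hF, Finset.mem_filter, Finset.mem_Icc] at hi
      have hfac := one_add_X_pow_factor ζ hζ0 i hi.1.1 ((zeta_pow_iff d hd i).mpr hi.2)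
      rw [eval_pow]
      exact pow_ne_zero _ hfac.2
    · intro i hi
      rw [Finset.mem_filter] at hi
      rw [eval_pow]
      refine pow_ne_zero _ ?_
      simp only [eval_add, eval_one, eval_pow, eval_X]
      intro hcon
      exact hi.2 ((zeta_pow_iff d hd i).mp (by linear_combination hcon))

lemma mem_F_ge {n d i : ℕ} (hd : 1 ≤ d)
    (hi : i ∈ (Icc 1 n).filter (fun i => i % (2*d) = d)) : d ≤ i := by
  rw [Finset.mem_filter] at hi
  rcases Nat.lt_or_ge i d with h | h
  · exfalso; rw [Nat.mod_eq_of_lt (by omega)] at hi; omega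
  · exact h

lemma mem_F_ne_ge {n d i : ℕ} (hd : 1 ≤ d)
    (hi : i ∈ (Icc 1 n).filter (fun i => i % (2*d) = d)) (hne : i ≠ d) : 3*d ≤ i := by
  rw [Finset.mem_filter] at hi
  have h2 := hi.2
  have hq := Nat.div_add_mod i (2*d)
  rcases Nat.eq_zero_or_pos (i / (2*d)) with h0 | h0
  · rw [h0, Nat.mul_zero] at hq; omega
  · nlinarith [h0, hq, h2]

-- K1
lemma sum_counts_le (n d : ℕ) (hd : 1 ≤ d) (lam : Nat.Partition n) :
    ∑ i ∈ (Icc 1 n).filter (fun i => i % (2*d) = d), lam.parts.count i ≤ n / d := by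
  set F := (Icc 1 n).filter (fun i => i % (2*d) = d) with hF
  rw [Nat.le_div_iff_mul_le (by omega)]
  have h1 : (∑ i ∈ F, lam.parts.count i) * d = ∑ i ∈ F, lam.parts.count i * d := by
    rw [Finset.sum_mul]
  rw [h1]
  calc ∑ i ∈ F, lam.parts.count i * d ≤ ∑ i ∈ F, lam.parts.count i * i := by
        refine Finset.sum_le_sum ?_
        intro i hi
        exact Nat.mul_le_mul_left _ (mem_F_ge hd hi)
    _ ≤ lam.parts.sum := sum_count_mul_le _ _
    _ = n := lam.parts_sum

-- equality case: count d = n/d and all other counts in F vanish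
lemma contrib_counts (n d : ℕ) (hd : 1 ≤ d) (hdn : d ≤ n) (lam : Nat.Partition n)
    (hc : ∑ i ∈ (Icc 1 n).filter (fun i => i % (2*d) = d), lam.parts.count i = n / d) :
    lam.parts.count d = n / d ∧
      ∀ i ∈ (Icc 1 n).filter (fun i => i % (2*d) = d), i ≠ d → lam.parts.count i = 0 := by
  set F := (Icc 1 n).filter (fun i => i % (2*d) = d) with hF
  have hdF : d ∈ F := by
    rw [hF, Finset.mem_filter, Finset.mem_Icc]
    exact ⟨⟨hd, hdn⟩, Nat.mod_eq_of_lt (by omega)⟩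
  have hzero : ∀ i ∈ F, i ≠ d → lam.parts.count i = 0 := by
    intro j hj hne
    by_contra hcj
    have hcj1 : 1 ≤ lam.parts.count j := Nat.one_le_iff_ne_zero.mpr hcj
    have hj3 : 3*d ≤ j := mem_F_ne_ge hd hj hne
    have hsum_erase : ∑ i ∈ F.erase j, lam.parts.count i + lam.parts.count j = n / d := by
      rw [Finset.sum_erase_add _ _ hj]; exact hc
    have hbound : ∑ i ∈ F, lam.parts.count i * i ≤ n :=
      le_trans (sum_count_mul_le lam.parts F) (le_of_eq lam.parts_sum)
    have hsplit : ∑ i ∈ F.erase j, lam.parts.count i * i + lam.parts.count j * j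
        = ∑ i ∈ F, lam.parts.count i * i := Finset.sum_erase_add _ _ hj
    have hge : ∑ i ∈ F.erase j, lam.parts.count i * d ≤ ∑ i ∈ F.erase j, lam.parts.count i * i := by
      refine Finset.sum_le_sum ?_
      intro i hi
      exact Nat.mul_le_mul_left _ (mem_F_ge hd (Finset.mem_of_mem_erase hi))
    have hge2 : (∑ i ∈ F.erase j, lam.parts.count i) * d = ∑ i ∈ F.erase j, lam.parts.count i * d := by
      rw [Finset.sum_mul]
    have hda : d * (n/d) ≤ n := Nat.mul_div_le n d
    have hrn : n < d * (n/d) + d := by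
      have h1 := Nat.div_add_mod n d
      have h2 : n % d < d := Nat.mod_lt _ (by omega)
      omega
    set s := ∑ i ∈ F.erase j, lam.parts.count i
    set cj := lam.parts.count j
    -- s + cj = n/d, s*d + cj*j ≤ n < d*(n/d)+d, j ≥ 3d, cj ≥ 1 : contradiction
    nlinarith [hsum_erase, hge, hge2, hsplit, hbound, hrn, hcj1, hj3]
  refine ⟨?_, hzero⟩
  have : ∑ i ∈ F.erase d, lam.parts.count i = 0 := by
    refine Finset.sum_eq_zero ?_
    intro i hi
    exact hzero i (Finset.mem_of_mem_erase hi) (Finset.ne_of_mem_erase hi)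
  have h2 : ∑ i ∈ F.erase d, lam.parts.count i + lam.parts.count d = n / d := by
    rw [Finset.sum_erase_add _ _ hdF]; exact hc
  omega

/-- the lift of a partition of `n % d` to a partition of `n`, adding `n/d` parts equal to `d`. -/
def liftPart (n d : ℕ) (hd : 1 ≤ d) (hdn : d ≤ n) (μ : Nat.Partition (n % d)) :
    Nat.Partition n where
  parts := Multiset.replicate (n / d) d + μ.parts
  parts_pos := by
    intro i hi
    rcases Multiset.mem_add.mp hi with h | h
    · rw [Multiset.eq_of_mem_replicate h]; omega
    · exact μ.parts_pos h
  parts_sum := by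
    rw [Multiset.sum_add, Multiset.sum_replicate, smul_eq_mul, μ.parts_sum,
      Nat.mul_comm]
    exact Nat.div_add_mod n d

/-- `R(x)` : the fixed cofactor polynomial. -/
noncomputable def Rpoly (n d : ℕ) : Polynomial ℤ :=
  ∏ i ∈ Finset.Icc 1 n,
    (1 + X ^ i) ^ (n / i - (n % d) / i - (if i = d then n / d else 0))

lemma hPoly_extend (n d : ℕ) (hd : 1 ≤ d) (μ : Nat.Partition (n % d)) :
    hPoly (n % d) μ = ∏ i ∈ Finset.Icc 1 n, (1 + X ^ i) ^ ((n % d) / i - μ.parts.count i) := by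
  refine Finset.prod_subset ?_ ?_
  · exact Finset.Icc_subset_Icc le_rfl (Nat.mod_le n d)
  · intro i hi hni
    rw [Finset.mem_Icc] at hi hni
    have hir : n % d < i := by omega
    have hdiv : (n % d) / i = 0 := Nat.div_eq_of_lt hir
    have hcount : μ.parts.count i = 0 := by
      rw [Multiset.count_eq_zero]
      intro hmem
      exact absurd (part_le_n μ hmem) (by omega)
    rw [hdiv, hcount]
    simp

lemma hPoly_lift (n d : ℕ) (hd : 1 ≤ d) (hdn : d ≤ n) (μ : Nat.Partition (n % d)) :
    hPoly n (liftPart n d hd hdn μ) = Rpoly n d * hPoly (n % d) μ := by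
  rw [hPoly_extend n d hd μ, Rpoly, hPoly, ← Finset.prod_mul_distrib]
  refine Finset.prod_congr rfl ?_
  intro i hi
  rw [Finset.mem_Icc] at hi
  rw [← pow_add]
  congr 1
  show n / i - (Multiset.replicate (n / d) d + μ.parts).count i = _
  rw [Multiset.count_add, Multiset.count_replicate]
  have hcle : μ.parts.count i ≤ (n % d) / i := count_le_div μ (by omega)
  by_cases hid : i = d
  · have hr : (n % d) / i = 0 := by
      rw [hid]
      exact Nat.div_eq_of_lt (Nat.mod_lt n (by omega))
    have hnd : n / i = n / d := by rw [hid]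
    simp only [if_pos hid, if_pos hid.symm]
    omega
  · have hd2 : ¬ (d = i) := fun h => hid h.symm
    simp only [if_neg hid, if_neg hd2]
    have : (n % d) / i ≤ n / i := Nat.div_le_div_right (Nat.mod_le n d)
    omega

/-- contributing partitions -/
def contrib (n d : ℕ) (lam : Nat.Partition n) : Prop :=
  ∑ i ∈ (Icc 1 n).filter (fun i => i % (2*d) = d), lam.parts.count i = n / d

instance contrib.dec (n d : ℕ) : DecidablePred (contrib n d) := fun lam => by
  unfold contrib; infer_instance

lemma contrib_lift (n d : ℕ) (hd : 1 ≤ d) (hdn : d ≤ n) (μ : Nat.Partition (n % d)) :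
    contrib n d (liftPart n d hd hdn μ) := by
  unfold contrib
  set F := (Icc 1 n).filter (fun i => i % (2*d) = d) with hF
  have hdF : d ∈ F := by
    rw [hF, Finset.mem_filter, Finset.mem_Icc]
    exact ⟨⟨hd, hdn⟩, Nat.mod_eq_of_lt (by omega)⟩
  have hcount : ∀ i ∈ F, (liftPart n d hd hdn μ).parts.count i
      = (if d = i then n / d else 0) := by
    intro i hiF
    show (Multiset.replicate (n / d) d + μ.parts).count i = _
    rw [Multiset.count_add, Multiset.count_replicate]
    have : μ.parts.count i = 0 := by
      rw [Multiset.count_eq_zero]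
      intro hmem
      have h1 := part_le_n μ hmem
      have h2 : n % d < d := Nat.mod_lt n (by omega)
      have h3 : d ≤ i := by
        rw [hF, Finset.mem_filter] at hiF
        rcases Nat.lt_or_ge i d with h | h
        · exfalso; rw [Nat.mod_eq_of_lt (by omega)] at hiF; omega
        · exact h
      omega
    omega
  rw [Finset.sum_congr rfl hcount, Finset.sum_eq_single_of_mem d hdF
    (by intro b _ hb; simp [Ne.symm hb]), if_pos rfl]

lemma sum_contrib_eq (n d : ℕ) (hd : 1 ≤ d) (hdn : d ≤ n) :
    ∑ lam ∈ Finset.univ.filter (fun lam => contrib n d lam), hPoly n lam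
      = ∑ μ : Nat.Partition (n % d), hPoly n (liftPart n d hd hdn μ) := by
  classical
  refine (Finset.sum_bij (fun μ _ => liftPart n d hd hdn μ) ?_ ?_ ?_ ?_).symm
  · intro μ _
    rw [Finset.mem_filter]
    exact ⟨Finset.mem_univ _, contrib_lift n d hd hdn μ⟩
  · intro μ1 _ μ2 _ heq
    have : (liftPart n d hd hdn μ1).parts = (liftPart n d hd hdn μ2).parts := by
      simpa using congrArg Nat.Partition.parts heq
    have h2 : Multiset.replicate (n / d) d + μ1.parts
        = Multiset.replicate (n / d) d + μ2.parts := this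
    exact Nat.Partition.ext (add_left_cancel h2)
  · intro lam hlam
    rw [Finset.mem_filter] at hlam
    have hc := contrib_counts n d hd hdn lam hlam.2
    have hle : Multiset.replicate (n / d) d ≤ lam.parts :=
      Multiset.le_count_iff_replicate_le.mp (le_of_eq hc.1.symm)
    have hsub : Multiset.replicate (n / d) d + (lam.parts - Multiset.replicate (n / d) d)
        = lam.parts := by
      rw [add_comm]
      exact tsub_add_cancel_of_le hle
    refine ⟨⟨lam.parts - Multiset.replicate (n / d) d, ?_, ?_⟩, Finset.mem_univ _, ?_⟩
    · intro i hi
      exact lam.parts_pos (Multiset.mem_of_le (tsub_le_self) hi)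
    · have hsum := congrArg Multiset.sum hsub
      rw [Multiset.sum_add, Multiset.sum_replicate, smul_eq_mul, lam.parts_sum] at hsum
      have hdm := Nat.div_add_mod n d
      have : n / d * d = d * (n / d) := Nat.mul_comm _ _
      omega
    · exact Nat.Partition.ext hsub
  · intro μ _
    rfl

lemma Xd_dvd (d i : ℕ) (hd : 1 ≤ d) (hmod : i % (2*d) = d) :
    ((X : Polynomial ℤ)^d + 1) ∣ (1 + X^i) := by
  have hq := Nat.div_add_mod i (2*d)
  set q := i / (2*d) with hq2
  have hi : i = d * (2*q+1) := by
    have h2 : i = 2*d*q + d := by omega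
    rw [h2]; ring
  have hodd : Odd (2*q+1) := ⟨q, by ring⟩
  have h := Odd.add_dvd_pow_add_pow ((X : Polynomial ℤ)^d) 1 hodd
  rw [one_pow, ← pow_mul] at h
  rw [hi, add_comm (1 : Polynomial ℤ)]
  exact h

lemma pow_dvd_hPoly (n d : ℕ) (hd : 1 ≤ d) (lam : Nat.Partition n) :
    ((X : Polynomial ℤ)^d + 1) ^
        (∑ i ∈ (Icc 1 n).filter (fun i => i % (2*d) = d), (n / i - lam.parts.count i))
      ∣ hPoly n lam := by
  set F := (Icc 1 n).filter (fun i => i % (2*d) = d) with hF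
  have h1 : ((X : Polynomial ℤ)^d + 1) ^ (∑ i ∈ F, (n / i - lam.parts.count i))
      = ∏ i ∈ F, ((X : Polynomial ℤ)^d + 1) ^ (n / i - lam.parts.count i) :=
    (Finset.prod_pow_eq_pow_sum _ _ _).symm
  rw [h1]
  refine dvd_trans (Finset.prod_dvd_prod_of_dvd _ _ ?_)
    (Finset.prod_dvd_prod_of_subset F (Icc 1 n) _ (Finset.filter_subset _ _))
  intro i hi
  rw [hF, Finset.mem_filter] at hi
  exact pow_dvd_pow_of_dvd (Xd_dvd d i hd hi.2) _

lemma E_identity (n d : ℕ) (hd : 1 ≤ d) (lam : Nat.Partition n) :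
    ∑ i ∈ (Icc 1 n).filter (fun i => i % (2*d) = d), (n / i - lam.parts.count i)
      + ∑ i ∈ (Icc 1 n).filter (fun i => i % (2*d) = d), lam.parts.count i
      = ∑ i ∈ (Icc 1 n).filter (fun i => i % (2*d) = d), n / i := by
  rw [← Finset.sum_add_distrib]
  refine Finset.sum_congr rfl ?_
  intro i hi
  rw [Finset.mem_filter, Finset.mem_Icc] at hi
  exact Nat.sub_add_cancel (count_le_div lam hi.1.1)

lemma sum_F_split (n d : ℕ) (hd : 1 ≤ d) (hdn : d ≤ n) :
    ∑ i ∈ ((Icc 1 n).filter (fun i => i % (2*d) = d)).erase d, n / i + n / d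
      = ∑ i ∈ (Icc 1 n).filter (fun i => i % (2*d) = d), n / i := by
  have hdF : d ∈ (Icc 1 n).filter (fun i => i % (2*d) = d) := by
    rw [Finset.mem_filter, Finset.mem_Icc]
    exact ⟨⟨hd, hdn⟩, Nat.mod_eq_of_lt (by omega)⟩
  exact Finset.sum_erase_add _ _ hdF

lemma pow_e_dvd_GPoly (n d : ℕ) (hd : 1 ≤ d) (hdn : d ≤ n) :
    ((X : Polynomial ℤ)^d + 1) ^
        (∑ i ∈ ((Icc 1 n).filter (fun i => i % (2*d) = d)).erase d, n / i)
      ∣ GPoly n := by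
  refine Finset.dvd_gcd ?_
  intro lam _
  refine dvd_trans (pow_dvd_pow _ ?_) (pow_dvd_hPoly n d hd lam)
  have h1 := E_identity n d hd lam
  have h2 := sum_F_split n d hd hdn
  have h3 := sum_counts_le n d hd lam
  omega




lemma map_hPoly (m : ℕ) (μ : Nat.Partition m) :
    (hPoly m μ).map (algebraMap ℤ ℂ)
      = ∏ i ∈ Finset.Icc 1 m, ((1 : Polynomial ℂ) + X ^ i) ^ (m / i - μ.parts.count i) := by
  simp [hPoly, Polynomial.map_prod, Polynomial.map_pow, Polynomial.map_add,
    Polynomial.map_one, Polynomial.map_X]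

lemma map_Rpoly (n d : ℕ) :
    (Rpoly n d).map (algebraMap ℤ ℂ)
      = ∏ i ∈ Finset.Icc 1 n,
          ((1 : Polynomial ℂ) + X ^ i) ^ (n / i - (n % d) / i - (if i = d then n / d else 0)) := by
  simp [Rpoly, Polynomial.map_prod, Polynomial.map_pow, Polynomial.map_add,
    Polynomial.map_one, Polynomial.map_X]

lemma eval_map_hPoly_ne (n d : ℕ) (hd : 1 ≤ d) (hrd : n % d < d) (μ : Nat.Partition (n % d)) :
    ((hPoly (n % d) μ).map (algebraMap ℤ ℂ)).eval
      (Complex.exp (Real.pi * Complex.I / d)) ≠ 0 := by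
  rw [map_hPoly, eval_prod]
  refine Finset.prod_ne_zero_iff.mpr ?_
  intro i hi
  rw [Finset.mem_Icc] at hi
  rw [eval_pow]
  refine pow_ne_zero _ ?_
  simp only [eval_add, eval_one, eval_pow, eval_X]
  intro hcon
  have h1 : (Complex.exp (Real.pi * Complex.I / d)) ^ i = -1 := by linear_combination hcon
  have h2 := (zeta_pow_iff d hd i).mp h1
  rw [Nat.mod_eq_of_lt (by omega)] at h2
  omega

lemma w_sum (n d : ℕ) (hd : 1 ≤ d) (hdn : d ≤ n) :
    ∑ i ∈ (Icc 1 n).filter (fun i => i % (2*d) = d),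
        (n / i - (n % d) / i - (if i = d then n / d else 0))
      = ∑ i ∈ ((Icc 1 n).filter (fun i => i % (2*d) = d)).erase d, n / i := by
  set F := (Icc 1 n).filter (fun i => i % (2*d) = d) with hF
  have hrd : n % d < d := Nat.mod_lt n (by omega)
  have hterm : ∀ i ∈ F, n / i - (n % d) / i - (if i = d then n / d else 0)
      = (if i = d then 0 else n / i) := by
    intro i hiF
    by_cases hid : i = d
    · rw [if_pos hid, if_pos hid, hid]
      rw [Nat.div_eq_of_lt hrd]
      simp
    · rw [if_neg hid, if_neg hid]
      have hdle : d ≤ i := by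
        rw [hF, Finset.mem_filter] at hiF
        rcases Nat.lt_or_ge i d with h | h
        · exfalso; rw [Nat.mod_eq_of_lt (by omega)] at hiF; omega
        · exact h
      have h2 : (n % d) / i = 0 := Nat.div_eq_of_lt (by omega)
      rw [h2]
      simp
  have hdF : d ∈ F := by
    rw [hF, Finset.mem_filter, Finset.mem_Icc]
    exact ⟨⟨hd, hdn⟩, Nat.mod_eq_of_lt (by omega)⟩
  have h3 := Finset.sum_erase_add F (fun i => if i = d then 0 else n / i) hdF
  rw [Finset.sum_congr rfl hterm, ← h3]
  have h4 : (fun i => if i = d then 0 else n / i) d = 0 := by simp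
  rw [if_pos (rfl : d = d), Nat.add_zero]
  exact Finset.sum_congr rfl (fun i hi => if_neg (Finset.ne_of_mem_erase hi))

/-- Remainder reduction: for `n, d ≥ 1`, writing `n = a·d + r` with `a = ⌊n/d⌋` and
`0 ≤ r < d` (i.e. `r = n % d`), and `ζ_{2d} := e^{πi/d}`, we have
`num(n, ζ_{2d}) ≠ 0 ↔ num(r, ζ_{2d}) ≠ 0`; indeed `num(n, ζ_{2d}) = C · num(r, ζ_{2d})`
for some nonzero complex number `C`. -/
theorem numPoly_remainder_reduction (n d : ℕ) (hn : 1 ≤ n) (hd : 1 ≤ d) :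
    (Polynomial.aeval (Complex.exp (Real.pi * Complex.I / (d : ℂ))) (numPoly n) ≠ 0 ↔
      Polynomial.aeval (Complex.exp (Real.pi * Complex.I / (d : ℂ))) (numPoly (n % d)) ≠ 0) ∧
    ∃ C : ℂ, C ≠ 0 ∧
      Polynomial.aeval (Complex.exp (Real.pi * Complex.I / (d : ℂ))) (numPoly n) =
        C * Polynomial.aeval (Complex.exp (Real.pi * Complex.I / (d : ℂ)))
              (numPoly (n % d)) := by
  classical
  rcases Nat.lt_or_ge n d with hnd | hdn
  · rw [Nat.mod_eq_of_lt hnd]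
    exact ⟨Iff.rfl, 1, one_ne_zero, (one_mul _).symm⟩
  -- main case
  set ζ := Complex.exp (Real.pi * Complex.I / (d : ℂ)) with hζdef
  have hζ0 : ζ ≠ 0 := Complex.exp_ne_zero _
  have hrd : n % d < d := Nat.mod_lt n (by omega)
  set F := (Icc 1 n).filter (fun i => i % (2*d) = d) with hF
  set e := ∑ i ∈ F.erase d, n / i with he
  set T := ((X : Polynomial ℂ) - C ζ) with hT
  have hTne : T ≠ 0 := X_sub_C_ne_zero ζ
  have hTpow : T ^ e ≠ 0 := pow_ne_zero _ hTne
  have haev : ∀ p : Polynomial ℤ, Polynomial.aeval ζ p = (p.map (algebraMap ℤ ℂ)).eval ζ := by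
    intro p; rw [aeval_def, eval_map]
  -- T divides the image of X^d+1
  have hTd : T ∣ ((X : Polynomial ℤ)^d + 1).map (algebraMap ℤ ℂ) := by
    rw [Polynomial.map_add, Polynomial.map_pow, Polynomial.map_X, Polynomial.map_one]
    rw [hT, dvd_iff_isRoot]
    have : ζ ^ d = -1 := (zeta_pow_iff d hd d).mpr (Nat.mod_eq_of_lt (by omega))
    simp [IsRoot, this]
  -- split off T^e from G
  obtain ⟨g, hg⟩ : ∃ g, (GPoly n).map (algebraMap ℤ ℂ) = T ^ e * g := by
    refine exists_eq_mul_right_of_dvd ?_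
    refine dvd_trans (pow_dvd_pow_of_dvd hTd e) ?_
    rw [← Polynomial.map_pow]
    exact Polynomial.map_dvd _ (pow_e_dvd_GPoly n d hd hdn)
  -- R = T^e * ρ with ρ(ζ) ≠ 0
  obtain ⟨ρ, hρ, hρ0⟩ : ∃ ρ, (Rpoly n d).map (algebraMap ℤ ℂ) = T ^ e * ρ ∧ ρ.eval ζ ≠ 0 := by
    obtain ⟨u, hu, hu0⟩ := prod_factor n d hd
      (fun i => n / i - (n % d) / i - (if i = d then n / d else 0))
    refine ⟨u, ?_, hu0⟩
    rw [map_Rpoly, hu, w_sum n d hd hdn]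
  -- the sum splits
  have hsplit : (∑ μ : Nat.Partition n, hPoly n μ)
      = Rpoly n d * (∑ μ : Nat.Partition (n % d), hPoly (n % d) μ)
        + ∑ lam ∈ Finset.univ.filter (fun lam => ¬ contrib n d lam), hPoly n lam := by
    rw [← Finset.sum_filter_add_sum_filter_not Finset.univ (contrib n d) (hPoly n),
      sum_contrib_eq n d hd hdn, Finset.mul_sum]
    congr 1
    refine Finset.sum_congr rfl ?_
    intro μ _
    exact hPoly_lift n d hd hdn μ
  -- error term divisible by T^(e+1)
  obtain ⟨E', hE'⟩ : ∃ E',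
      ((∑ lam ∈ Finset.univ.filter (fun lam => ¬ contrib n d lam), hPoly n lam).map
        (algebraMap ℤ ℂ)) = T ^ (e+1) * E' := by
    refine exists_eq_mul_right_of_dvd ?_
    refine dvd_trans (pow_dvd_pow_of_dvd hTd (e+1)) ?_
    rw [← Polynomial.map_pow]
    refine Polynomial.map_dvd _ ?_
    refine Finset.dvd_sum ?_
    intro lam hlam
    rw [Finset.mem_filter] at hlam
    refine dvd_trans (pow_dvd_pow _ ?_) (pow_dvd_hPoly n d hd lam)
    have h1 := E_identity n d hd lam
    have h2 := sum_F_split n d hd hdn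
    have h3 := sum_counts_le n d hd lam
    have h4 : ¬ (∑ i ∈ F, lam.parts.count i = n / d) := hlam.2
    rw [hF] at *
    omega
  -- g(ζ) ≠ 0
  set μ0 : Nat.Partition (n % d) := Nat.Partition.indiscrete (n % d) with hμ0
  have hμ0val : ((hPoly (n % d) μ0).map (algebraMap ℤ ℂ)).eval ζ ≠ 0 :=
    eval_map_hPoly_ne n d hd hrd μ0
  have hg0 : g.eval ζ ≠ 0 := by
    obtain ⟨q, hq0⟩ := exists_eq_mul_right_of_dvd
      (Finset.gcd_dvd (Finset.mem_univ (liftPart n d hd hdn μ0)) :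
        GPoly n ∣ hPoly n (liftPart n d hd hdn μ0))
    have hq : Rpoly n d * hPoly (n % d) μ0 = GPoly n * q :=
      (hPoly_lift n d hd hdn μ0).symm.trans hq0
    have hmap := congrArg (Polynomial.map (algebraMap ℤ ℂ)) hq
    rw [Polynomial.map_mul, Polynomial.map_mul, hρ, hg] at hmap
    have hcan : ρ * (hPoly (n % d) μ0).map (algebraMap ℤ ℂ) = g * q.map (algebraMap ℤ ℂ) := by
      have h2 : T ^ e * (ρ * (hPoly (n % d) μ0).map (algebraMap ℤ ℂ))
          = T ^ e * (g * q.map (algebraMap ℤ ℂ)) := by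
        rw [← mul_assoc, hmap, mul_assoc]
      exact mul_left_cancel₀ hTpow h2
    have hev := congrArg (eval ζ) hcan
    rw [eval_mul, eval_mul] at hev
    intro hcon
    rw [hcon, zero_mul] at hev
    exact mul_ne_zero hρ0 hμ0val hev
  -- main cancellation
  have hspec_n : (∑ μ : Nat.Partition n, hPoly n μ) = GPoly n * numPoly n :=
    (GPoly_dvd_sum n).choose_spec
  have hspec_r : (∑ μ : Nat.Partition (n % d), hPoly (n % d) μ)
      = GPoly (n % d) * numPoly (n % d) :=
    (GPoly_dvd_sum (n % d)).choose_spec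
  have hmain : g * (numPoly n).map (algebraMap ℤ ℂ)
      = ρ * ((∑ μ : Nat.Partition (n % d), hPoly (n % d) μ).map (algebraMap ℤ ℂ))
        + T * E' := by
    have h1 := congrArg (Polynomial.map (algebraMap ℤ ℂ)) (hspec_n.symm.trans hsplit)
    rw [Polynomial.map_add, Polynomial.map_mul, Polynomial.map_mul, hρ, hg, hE'] at h1
    have h2 : T ^ e * (g * (numPoly n).map (algebraMap ℤ ℂ))
        = T ^ e * (ρ * ((∑ μ : Nat.Partition (n % d), hPoly (n % d) μ).map (algebraMap ℤ ℂ))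
            + T * E') := by
      rw [← mul_assoc (T^e) g, h1]
      ring
    exact mul_left_cancel₀ hTpow h2
  have hev := congrArg (eval ζ) hmain
  rw [eval_mul, eval_add, eval_mul, eval_mul, hT] at hev
  rw [eval_sub, eval_X, eval_C, sub_self, zero_mul, add_zero] at hev
  -- value of Σr
  have hGr0 : ((GPoly (n % d)).map (algebraMap ℤ ℂ)).eval ζ ≠ 0 := by
    obtain ⟨q, hq0⟩ := exists_eq_mul_right_of_dvd
      (Finset.gcd_dvd (Finset.mem_univ μ0) : GPoly (n % d) ∣ hPoly (n % d) μ0)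
    have hq : hPoly (n % d) μ0 = GPoly (n % d) * q := hq0
    have hmap := congrArg (fun p => (Polynomial.map (algebraMap ℤ ℂ) p).eval ζ) hq
    simp only [Polynomial.map_mul, eval_mul] at hmap
    intro hcon
    rw [hcon, zero_mul] at hmap
    exact hμ0val hmap
  have hSr : ((∑ μ : Nat.Partition (n % d), hPoly (n % d) μ).map (algebraMap ℤ ℂ)).eval ζ
      = ((GPoly (n % d)).map (algebraMap ℤ ℂ)).eval ζ
        * ((numPoly (n % d)).map (algebraMap ℤ ℂ)).eval ζ := by
    rw [← eval_mul, ← Polynomial.map_mul, ← hspec_r]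
  rw [hSr] at hev
  -- conclude
  set A := ((numPoly n).map (algebraMap ℤ ℂ)).eval ζ with hA
  set B := ((numPoly (n % d)).map (algebraMap ℤ ℂ)).eval ζ with hB
  have hfinal : A = (ρ.eval ζ * ((GPoly (n % d)).map (algebraMap ℤ ℂ)).eval ζ / g.eval ζ) * B := by
    rw [div_mul_eq_mul_div, eq_div_iff hg0]
    linear_combination hev
  have hC0 : (ρ.eval ζ * ((GPoly (n % d)).map (algebraMap ℤ ℂ)).eval ζ / g.eval ζ) ≠ 0 := by
    apply div_ne_zero (mul_ne_zero hρ0 hGr0) hg0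
  rw [haev, haev, ← hA, ← hB]
  refine ⟨?_, _, hC0, hfinal⟩
  constructor
  · intro hA0 hB0
    rw [hB0, mul_zero] at hfinal
    exact hA0 hfinal
  · intro hB0 hA0
    rw [hfinal, mul_eq_zero] at hA0
    rcases hA0 with h | h
    · exact hC0 h
    · exact hB0 h
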